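/- A ring R is left hereditary if and only if for every R-module M and every exact chain complex N of R-modules, whenever there exists an integer n such that N_n lies in the subprojectivity domain of M, the complex N lies in the subprojectivity domain of the sphere complex underline{M}[n]. -/

import Mathlib

open CategoryTheory CategoryTheory.Limits ZeroObject

universe u

/-- `N` belongs to the subprojectivity domain of `M`: every morphism `M ⟶ N` factors
through a projective object. -/
def SubprojDomain {A : Type*} [Category A] (M N : A) : Prop :=
  ∀ f : M ⟶ N, ∃ (P : A) (_ : Projective P) (a : M ⟶ P) (b : P ⟶ N), a ≫ b = f

/-- `R` is left hereditary: every submodule of a projective left `R`-module is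
projective. -/
def IsLeftHereditary (R : Type u) [Ring R] : Prop :=
  ∀ (P : ModuleCat.{u} R), Projective P →
    ∀ S : Submodule R P, Projective (ModuleCat.of R S)

variable {R : Type u} [Ring R]

/-- Two-term complex: `A` in degree `n+1`, `B` in degree `n`, differential `φ`. -/
noncomputable def dbl (A B : ModuleCat.{u} R) (φ : A ⟶ B) (n : ℤ) :
    ChainComplex (ModuleCat.{u} R) ℤ where
  X i := if i = n + 1 then A else if i = n then B else 0
  d i j :=
    if h : i = n + 1 ∧ j = n then
      eqToHom (by rw [h.1]; simp) ≫ φ ≫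
        eqToHom (by rw [h.2]; simp) else 0
  shape i j hij := by
    rw [dif_neg]
    rintro ⟨rfl, rfl⟩
    exact hij rfl
  d_comp_d' i j k hij hjk := by
    by_cases h : i = n + 1 ∧ j = n
    · rw [dif_neg (by omega : ¬ (j = n + 1 ∧ k = n)), comp_zero]
    · rw [dif_neg h, zero_comp]

variable {A B : ModuleCat.{u} R} {φ : A ⟶ B} {n : ℤ}

lemma dbl_X_top : (dbl A B φ n).X (n + 1) = A := if_pos rfl

lemma dbl_X_bot : (dbl A B φ n).X n = B := by
  show (if n = n + 1 then A else if n = n then B else 0) = B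
  rw [if_neg (by omega), if_pos rfl]

lemma dbl_X_other (i : ℤ) (h1 : i ≠ n + 1) (h2 : i ≠ n) : (dbl A B φ n).X i = 0 := by
  show (if i = n + 1 then A else if i = n then B else 0) = 0
  rw [if_neg h1, if_neg h2]

lemma isZero_dbl_X (i : ℤ) (h1 : i ≠ n + 1) (h2 : i ≠ n) : IsZero ((dbl A B φ n).X i) := by
  rw [dbl_X_other i h1 h2]
  exact isZero_zero _

lemma dbl_d_eq :
    (dbl A B φ n).d (n + 1) n =
      eqToHom dbl_X_top ≫ φ ≫ eqToHom dbl_X_bot.symm := by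
  show (if h : (n+1 : ℤ) = n + 1 ∧ n = n then _ else 0) = _
  exact dif_pos ⟨rfl, rfl⟩

lemma dbl_d_eq_zero {i j : ℤ} (h : ¬ (i = n + 1 ∧ j = n)) : (dbl A B φ n).d i j = 0 := by
  show (if h : i = n + 1 ∧ j = n then _ else 0) = _
  exact dif_neg h

/-- Build a morphism out of a two-term complex. -/
noncomputable def mkHomFromDbl {K : ChainComplex (ModuleCat.{u} R) ℤ}
    (g₁ : A ⟶ K.X (n + 1)) (g₀ : B ⟶ K.X n)
    (comm : φ ≫ g₀ = g₁ ≫ K.d (n + 1) n)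
    (hg₀ : g₀ ≫ K.d n (n - 1) = 0) :
    dbl A B φ n ⟶ K where
  f i :=
    if h : i = n + 1 then
      eqToHom (by rw [h]; exact dbl_X_top) ≫ g₁ ≫ eqToHom (by rw [h])
    else if h' : i = n then
      eqToHom (by rw [h']; exact dbl_X_bot) ≫ g₀ ≫ eqToHom (by rw [h'])
    else 0
  comm' i j hij := by
    have hij' : j + 1 = i := hij
    by_cases h : i = n + 1
    · have hj : j = n := by omega
      subst hj; subst h
      rw [dif_pos rfl, dif_neg (by omega), dif_pos rfl, dbl_d_eq]
      simp [comm]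
    · by_cases h' : i = n
      · have hj : j = n - 1 := by omega
        subst hj; subst h'
        rw [dif_neg h, dif_pos rfl, dbl_d_eq_zero (by omega), zero_comp]
        simp [hg₀]
      · rw [dif_neg h, dif_neg h', zero_comp, dbl_d_eq_zero (by omega), zero_comp]

lemma mkHomFromDbl_f_top {K : ChainComplex (ModuleCat.{u} R) ℤ}
    (g₁ : A ⟶ K.X (n + 1)) (g₀ : B ⟶ K.X n) (comm) (hg₀) :
    (mkHomFromDbl (φ := φ) g₁ g₀ comm hg₀).f (n + 1) = eqToHom dbl_X_top ≫ g₁ := by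
  show dite _ _ _ = _
  rw [dif_pos rfl]
  simp

lemma mkHomFromDbl_f_bot {K : ChainComplex (ModuleCat.{u} R) ℤ}
    (g₁ : A ⟶ K.X (n + 1)) (g₀ : B ⟶ K.X n) (comm) (hg₀) :
    (mkHomFromDbl (φ := φ) g₁ g₀ comm hg₀).f n = eqToHom dbl_X_bot ≫ g₀ := by
  show dite _ _ _ = _
  rw [dif_neg (by omega), dif_pos rfl]
  simp

/-- Build a morphism into a disk complex `dbl A A (𝟙 A) n`. -/
noncomputable def mkHomToDisk {K : ChainComplex (ModuleCat.{u} R) ℤ}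
    (g : K.X n ⟶ A) : K ⟶ dbl A A (𝟙 A) n where
  f i :=
    if h : i = n + 1 then
      eqToHom (show K.X i = K.X (n + 1) by rw [h]) ≫ K.d (n + 1) n ≫ g ≫
        eqToHom (show A = (dbl A A (𝟙 A) n).X i by rw [h]; exact dbl_X_top.symm)
    else if h2 : i = n then
      eqToHom (show K.X i = K.X n by rw [h2]) ≫ g ≫
        eqToHom (show A = (dbl A A (𝟙 A) n).X i by rw [h2]; exact dbl_X_bot.symm)
    else 0
  comm' i j hij := by
    have hij2 : j + 1 = i := hij
    by_cases h : i = n + 1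
    · have hj : j = n := by omega
      subst hj; subst h
      rw [dif_pos rfl, dif_neg (by omega), dif_pos rfl, dbl_d_eq]
      simp
    · by_cases h2 : i = n
      · have hj : j = n - 1 := by omega
        subst hj; subst h2
        rw [dif_neg h, dif_pos rfl, dif_neg (by omega), dif_neg (by omega),
          dbl_d_eq_zero (by omega)]
        simp
      · by_cases h3 : j = n + 1
        · have hi : i = n + 1 + 1 := by omega
          subst hi; subst h3
          rw [dif_neg h, dif_neg h2, dif_pos rfl, zero_comp]
          have := K.d_comp_d (n + 1 + 1) (n + 1) n
          simp [reassoc_of% this]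
        · by_cases h4 : j = n
          · exact absurd (by omega : i = n + 1) h
          · rw [dif_neg h, dif_neg h2, dif_neg h3, dif_neg h4, zero_comp, comp_zero]

lemma mkHomToDisk_f_self {K : ChainComplex (ModuleCat.{u} R) ℤ} (g : K.X n ⟶ A) :
    (mkHomToDisk g).f n = g ≫ eqToHom dbl_X_bot.symm := by
  show dite _ _ _ = _
  rw [dif_neg (by omega), dif_pos rfl]
  simp

lemma projective_of_retract {C : Type*} [Category C] {X P : C} (hP : Projective P)
    (s : X ⟶ P) (p : P ⟶ X) (hsp : s ≫ p = 𝟙 X) : Projective X where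
  factors {E Y} f e he := by
    haveI := hP
    exact ⟨s ≫ Projective.factorThru (p ≫ f) e, by
      rw [Category.assoc, Projective.factorThru_comp, ← Category.assoc, hsp,
        Category.id_comp]⟩

/-- The disk complex on a projective module is a projective complex. -/
lemma projective_disk {A : ModuleCat.{u} R} (hA : Projective A) (n : ℤ) :
    Projective (dbl A A (𝟙 A) n) where
  factors {E Y} f e he := by
    haveI := hA
    haveI : Epi (e.f (n + 1)) := inferInstance
    set g₁ : A ⟶ E.X (n + 1) :=
      Projective.factorThru (eqToHom dbl_X_top.symm ≫ f.f (n + 1)) (e.f (n + 1)) with hg₁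
    have hfac : g₁ ≫ e.f (n + 1) = eqToHom dbl_X_top.symm ≫ f.f (n + 1) :=
      Projective.factorThru_comp _ _
    refine ⟨mkHomFromDbl g₁ (g₁ ≫ E.d (n + 1) n) (by simp) (by simp), ?_⟩
    refine HomologicalComplex.hom_ext _ _ fun i => ?_
    by_cases h : i = n + 1
    · subst h
      simp only [HomologicalComplex.comp_f, mkHomFromDbl_f_top, Category.assoc, hfac]
      simp
    · by_cases h2 : i = n
      · subst h2
        simp only [HomologicalComplex.comp_f, mkHomFromDbl_f_bot, Category.assoc]
        have comm := e.comm (i + 1) i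
        have fcomm := f.comm (i + 1) i
        rw [dbl_d_eq] at fcomm
        calc eqToHom dbl_X_bot ≫ (g₁ ≫ E.d (i + 1) i) ≫ e.f i
            = eqToHom dbl_X_bot ≫ g₁ ≫ e.f (i + 1) ≫ Y.d (i + 1) i := by
              rw [Category.assoc, ← comm]
          _ = f.f i := by
              rw [reassoc_of% hfac, fcomm]
              simp
      · exact (isZero_dbl_X i h h2).eq_of_src _ _

/-- Each component of a projective complex is projective. -/
lemma projective_X_of_projective (Q : ChainComplex (ModuleCat.{u} R) ℤ)
    (hQ : Projective Q) (i : ℤ) : Projective (Q.X i) where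
  factors {E Y} f e he := by
    haveI := hQ
    set em : dbl E E (𝟙 E) i ⟶ dbl Y Y (𝟙 Y) i :=
      mkHomFromDbl (e ≫ eqToHom dbl_X_top.symm) (e ≫ eqToHom dbl_X_bot.symm)
        (by rw [dbl_d_eq]; simp) (by rw [dbl_d_eq_zero (by omega)]; simp) with hem
    haveI : Epi em := by
      apply HomologicalComplex.epi_of_epi_f
      intro k
      by_cases h : k = i + 1
      · subst h
        rw [hem, mkHomFromDbl_f_top]
        infer_instance
      · by_cases h2 : k = i
        · subst h2
          rw [hem, mkHomFromDbl_f_bot]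
          infer_instance
        · exact ⟨fun g1 g2 _ =>
            (isZero_dbl_X (A := Y) (B := Y) (φ := 𝟙 Y) k h h2).eq_of_src g1 g2⟩
    obtain ⟨L, hL⟩ := Projective.factors (mkHomToDisk f) em
    refine ⟨L.f i ≫ eqToHom dbl_X_bot, ?_⟩
    have hth := HomologicalComplex.congr_hom hL i
    rw [HomologicalComplex.comp_f, hem, mkHomFromDbl_f_bot, mkHomToDisk_f_self] at hth
    rw [← cancel_mono (eqToHom (dbl_X_bot (A := Y) (B := Y) (φ := 𝟙 Y) (n := i)).symm)]
    simpa using hth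

/-- The kernel of a differential of a projective complex is projective. -/
lemma projective_ker_of_projective (Q : ChainComplex (ModuleCat.{u} R) ℤ)
    (hQ : Projective Q) (n : ℤ) :
    Projective (ModuleCat.of R (LinearMap.ker (Q.d n (n - 1)).hom)) := by
  haveI := hQ
  -- the contractible "cylinder" complex surjecting onto Q
  let C : ChainComplex (ModuleCat.{u} R) ℤ :=
    { X := fun i => Q.X i ⊞ Q.X (i + 1)
      d := fun i j =>
        if h : j + 1 = i then
          biprod.lift 0 (biprod.fst ≫ eqToHom (congrArg Q.X h.symm)) else 0
      shape := fun i j hij => dif_neg hij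
      d_comp_d' := fun i j k hij hjk => by
        have hij' : j + 1 = i := hij
        have hjk' : k + 1 = j := hjk
        rw [dif_pos hij', dif_pos hjk']
        apply biprod.hom_ext <;> simp }
  let ε : C ⟶ Q :=
    { f := fun i => biprod.desc (𝟙 _) (Q.d (i + 1) i)
      comm' := fun i j hij => by
        have hij' : j + 1 = i := hij
        subst hij'
        show biprod.desc (𝟙 _) (Q.d (j + 1 + 1) (j + 1)) ≫ Q.d (j + 1) j =
          dite _ _ _ ≫ biprod.desc (𝟙 _) (Q.d (j + 1) j)
        rw [dif_pos rfl]
        apply biprod.hom_ext' <;> simp }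
  haveI : Epi ε := by
    apply HomologicalComplex.epi_of_epi_f
    intro i
    exact epi_of_epi_fac (biprod.inl_desc (𝟙 (Q.X i)) (Q.d (i + 1) i))
  obtain ⟨σ, hσ⟩ := Projective.factors (𝟙 Q) ε
  -- contracting homotopy data
  set t : Q.X n ⟶ Q.X n := σ.f n ≫ biprod.fst with ht
  set s : ∀ i, Q.X i ⟶ Q.X (i + 1) := fun i => σ.f i ≫ biprod.snd with hs
  have key : 𝟙 (Q.X n) = t + s n ≫ Q.d (n + 1) n := by
    have h1 := HomologicalComplex.congr_hom hσ n
    have h2 : (ε.f n : C.X n ⟶ Q.X n) =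
        biprod.fst ≫ 𝟙 (Q.X n) + biprod.snd ≫ Q.d (n + 1) n := by
      apply biprod.hom_ext' <;> simp [ε]
    rw [HomologicalComplex.comp_f, h2, HomologicalComplex.id_f] at h1
    rw [← h1]
    simp [t, s, Preadditive.comp_add]
  have trel : t = Q.d n (n - 1) ≫ s (n - 1) ≫
      eqToHom (congrArg Q.X (by omega : n - 1 + 1 = n)) := by
    have h3 := σ.comm' n (n - 1) (show n - 1 + 1 = n by omega)
    have h5 := congrArg (fun m => m ≫ (biprod.snd : C.X (n - 1) ⟶ Q.X (n - 1 + 1)) ≫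
      eqToHom (congrArg Q.X (by omega : n - 1 + 1 = n))) h3
    dsimp [C] at h5
    rw [dif_pos (show n - 1 + 1 = n by omega)] at h5
    simp only [Category.assoc, biprod.lift_snd_assoc] at h5
    simpa [t, s] using h5
  -- the retraction
  let Z := LinearMap.ker (Q.d n (n - 1)).hom
  let r : ModuleCat.of R Z ⟶ Q.X (n + 1) := ModuleCat.ofHom ((s n).hom.comp Z.subtype)
  let p : Q.X (n + 1) ⟶ ModuleCat.of R Z :=
    ModuleCat.ofHom <| LinearMap.codRestrict Z (Q.d (n + 1) n).hom (fun y => LinearMap.mem_ker.mpr (by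
      have h0 : (Q.d (n + 1) n ≫ Q.d n (n - 1)) y = (0 : Q.X (n + 1) ⟶ Q.X (n - 1)) y := by
        rw [Q.d_comp_d]
      exact h0))
  have hsp : r ≫ p = 𝟙 (ModuleCat.of R Z) := by
    apply ModuleCat.hom_ext
    apply LinearMap.ext
    intro z
    apply Subtype.ext
    show Q.d (n + 1) n ((s n) z.val) = z.val
    have hz : (z.val : Q.X n) = t z.val + (Q.d (n + 1) n) ((s n) z.val) :=
      DFunLike.congr_fun (congrArg ModuleCat.Hom.hom key) z.val
    have htz : t z.val = 0 := by
      have h6 := DFunLike.congr_fun (congrArg ModuleCat.Hom.hom trel) z.val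
      simpa using h6
    rw [htz, zero_add] at hz
    exact hz.symm
  exact projective_of_retract (projective_X_of_projective Q hQ (n + 1)) r p hsp

lemma exactAt_iff_module (N : ChainComplex (ModuleCat.{u} R) ℤ) (n : ℤ) :
    N.ExactAt n ↔
      ∀ x : N.X n, N.d n (n - 1) x = 0 → ∃ y : N.X (n + 1), N.d (n + 1) n y = x := by
  rw [N.exactAt_iff' (n + 1) n (n - 1) (ChainComplex.prev _ n) (ChainComplex.next _ n)]
  exact ShortComplex.moduleCat_exact_iff _

/-- Three-term complex `A` in degree `1`, `B` in degree `0`, `C` in degree `-1`. -/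
noncomputable def tri (A B C : ModuleCat.{u} R) (f : A ⟶ B) (g : B ⟶ C)
    (w : f ≫ g = 0) : ChainComplex (ModuleCat.{u} R) ℤ where
  X i := if i = 1 then A else if i = 0 then B else if i = -1 then C else 0
  d i j :=
    if h : i = 1 ∧ j = 0 then
      eqToHom (by rw [h.1]; simp) ≫ f ≫ eqToHom (by rw [h.2]; simp)
    else if h2 : i = 0 ∧ j = -1 then
      eqToHom (by rw [h2.1]; simp) ≫ g ≫ eqToHom (by rw [h2.2]; simp)
    else 0
  shape i j hij := by
    rw [dif_neg, dif_neg]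
    · rintro ⟨rfl, rfl⟩; exact hij rfl
    · rintro ⟨rfl, rfl⟩; exact hij rfl
  d_comp_d' i j k hij hjk := by
    have hij' : j + 1 = i := hij
    have hjk' : k + 1 = j := hjk
    by_cases h : i = 1 ∧ j = 0
    · rw [dif_pos h, dif_neg (by omega), dif_pos (by omega)]
      obtain ⟨rfl, rfl⟩ := h
      have hk : k = -1 := by omega
      subst hk
      simp [w, reassoc_of% w]
    · rw [dif_neg h]
      by_cases h2 : i = 0 ∧ j = -1
      · rw [dif_pos h2, dif_neg (by omega), dif_neg (by omega), comp_zero]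
      · rw [dif_neg h2, zero_comp]

section tri
variable {A B C : ModuleCat.{u} R} {f : A ⟶ B} {g : B ⟶ C} {w : f ≫ g = 0}

example : (tri A B C f g w).X 1 = A := rfl
example : (tri A B C f g w).X 0 = B := rfl
example : (tri A B C f g w).X (-1) = C := rfl
example : (tri A B C f g w).d 1 0 = f := rfl
example : (tri A B C f g w).d 0 (-1) = g := rfl
end tri

lemma isZero_tri_X {A B C : ModuleCat.{u} R} {f : A ⟶ B} {g : B ⟶ C} {w : f ≫ g = 0}
    (i : ℤ) (h1 : i ≠ 1) (h2 : i ≠ 0) (h3 : i ≠ -1) : IsZero ((tri A B C f g w).X i) := by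
  have : (tri A B C f g w).X i = 0 := by
    show (if i = 1 then A else if i = 0 then B else if i = -1 then C else 0) = 0
    rw [if_neg h1, if_neg h2, if_neg h3]
  rw [this]
  exact isZero_zero _


/-- `R` is left hereditary iff for every module `M` and every exact complex
`N`, whenever there is `n` with `N_n` in the subprojectivity domain of `M`, the complex `N`
lies in the subprojectivity domain of the sphere complex `M` concentrated in degree `n`. -/
theorem isLeftHereditary_iff_subprojDomain
    {R : Type u} [Ring R] :
    IsLeftHereditary R ↔
      ∀ (M : ModuleCat.{u} R) (N : ChainComplex (ModuleCat.{u} R) ℤ),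
        (∀ i : ℤ, N.ExactAt i) →
        ∀ n : ℤ, SubprojDomain M (N.X n) →
          SubprojDomain
            ((HomologicalComplex.single (ModuleCat.{u} R) (ComplexShape.down ℤ) n).obj M)
            N := by
  constructor
  · -- hereditary implies the factorization property
    intro hered M N hex n hsub f
    set ι := HomologicalComplex.singleObjXSelf (ComplexShape.down ℤ) n M with hι
    set u : M ⟶ N.X n := ι.inv ≫ f.f n with hu
    have hu0 : u ≫ N.d n (n - 1) = 0 := by
      have hc := f.comm' n (n - 1) (show n - 1 + 1 = n by omega)
      rw [hu, Category.assoc, hc, HomologicalComplex.single_obj_d, zero_comp, comp_zero]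
    obtain ⟨P0, hP0, a0, b0, hab0⟩ := hsub u
    let Z := LinearMap.ker (N.d n (n - 1)).hom
    let S' : Submodule R P0 := Z.comap b0.hom
    have hS' : Projective (ModuleCat.of R S') := hered P0 hP0 S'
    let a1 : M ⟶ ModuleCat.of R S' := ModuleCat.ofHom <| LinearMap.codRestrict S' a0.hom (fun x => by
      show b0 (a0 x) ∈ Z
      have h1 : (a0 ≫ b0) x = u x := DFunLike.congr_fun (congrArg ModuleCat.Hom.hom hab0) x
      have h2 : (u ≫ N.d n (n - 1)) x = 0 := by rw [hu0]; rfl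
      have h3 : b0 (a0 x) = u x := h1
      show N.d n (n - 1) (b0 (a0 x)) = 0
      rw [h3]
      exact h2)
    let b1 : ModuleCat.of R S' ⟶ N.X n := ModuleCat.ofHom (b0.hom.comp S'.subtype)
    have hex' := (exactAt_iff_module N n).mp (hex n)
    haveI : Module.Projective R S' := (IsProjective.iff_projective.{u, u} (R := R) S').mpr hS'
    let e : N.X (n + 1) →ₗ[R] Z := LinearMap.codRestrict Z (N.d (n + 1) n).hom (fun y => by
      show N.d n (n - 1) (N.d (n + 1) n y) = 0
      have h0 : (N.d (n + 1) n ≫ N.d n (n - 1)) y = (0 : N.X (n + 1) ⟶ N.X (n - 1)) y := by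
        rw [N.d_comp_d]
      exact h0)
    have esurj : Function.Surjective e := fun z => by
      obtain ⟨y, hy⟩ := hex' z.val z.2
      exact ⟨y, Subtype.ext hy⟩
    let g' : ↥S' →ₗ[R] Z := LinearMap.codRestrict Z b1.hom (fun x => x.2)
    obtain ⟨h1, hh1⟩ := Module.projective_lifting_property e g' esurj
    let D := dbl (ModuleCat.of R S') (ModuleCat.of R S') (𝟙 _) n
    have hD : Projective D := projective_disk hS' n
    have hcomm : (𝟙 (ModuleCat.of R S')) ≫ b1 = ModuleCat.ofHom h1 ≫ N.d (n + 1) n := by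
      apply ModuleCat.hom_ext
      apply LinearMap.ext
      intro x
      have := DFunLike.congr_fun hh1 x
      have h4 : (e (h1 x)).val = (g' x).val := congrArg Subtype.val this
      exact h4.symm
    have hcond : b1 ≫ N.d n (n - 1) = 0 := by
      apply ModuleCat.hom_ext
      apply LinearMap.ext
      intro x
      exact x.2
    let Amap : ((HomologicalComplex.single (ModuleCat.{u} R) (ComplexShape.down ℤ) n).obj M) ⟶ D :=
      HomologicalComplex.mkHomFromSingle (a1 ≫ eqToHom dbl_X_bot.symm) (fun i hi => by
        have : i = n - 1 := by
          have : i + 1 = n := hi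
          omega
        subst this
        rw [dbl_d_eq_zero (by omega), comp_zero])
    let Bmap : D ⟶ N := mkHomFromDbl (ModuleCat.ofHom h1) b1 hcomm hcond
    refine ⟨D, hD, Amap, Bmap, ?_⟩
    refine HomologicalComplex.hom_ext _ _ fun i => ?_
    by_cases h : i = n
    · subst h
      rw [HomologicalComplex.comp_f]
      show Amap.f i ≫ Bmap.f i = f.f i
      rw [show Amap.f i = ι.hom ≫ (a1 ≫ eqToHom dbl_X_bot.symm) from
          HomologicalComplex.mkHomFromSingle_f _ _,
        show Bmap.f i = eqToHom dbl_X_bot ≫ b1 from mkHomFromDbl_f_bot _ _ _ _]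
      have hab1 : a1 ≫ b1 = u := by
        apply ModuleCat.hom_ext
        apply LinearMap.ext
        intro x
        exact DFunLike.congr_fun (congrArg ModuleCat.Hom.hom hab0) x
      rw [hu] at hab1
      simp only [Category.assoc, eqToHom_trans_assoc, eqToHom_refl, Category.id_comp]
      rw [hab1]
      simp [hι]
    · exact (HomologicalComplex.isZero_single_obj_X _ n M i h).eq_of_src _ _
  · -- the factorization property implies hereditary
    intro h P hP S
    set M : ModuleCat.{u} R := ModuleCat.of R S with hM
    set PS : ModuleCat.{u} R := ModuleCat.of R (P ⧸ S) with hPS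
    set f0 : M ⟶ P := ModuleCat.ofHom S.subtype with hf0
    set g0 : P ⟶ PS := ModuleCat.ofHom S.mkQ with hg0
    have w : f0 ≫ g0 = 0 := by
      apply ModuleCat.hom_ext
      apply LinearMap.ext
      intro x
      show S.mkQ x.val = 0
      rw [Submodule.mkQ_apply, Submodule.Quotient.mk_eq_zero]
      exact x.2
    set N := tri M P PS f0 g0 w with hN
    have hexact : ∀ i : ℤ, N.ExactAt i := by
      intro i
      by_cases h1 : i = 1
      · subst h1
        rw [exactAt_iff_module]
        intro x hx
        have hx0 : x = 0 := by
          apply Subtype.ext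
          exact hx
        refine ⟨0, ?_⟩
        rw [map_zero, hx0]
      · by_cases h2 : i = 0
        · subst h2
          rw [exactAt_iff_module]
          intro x hx
          have hmem : x ∈ S := by
            exact (Submodule.Quotient.mk_eq_zero S (x := (x : P))).mp hx
          exact ⟨⟨x, hmem⟩, rfl⟩
        · by_cases h3 : i = -1
          · subst h3
            rw [exactAt_iff_module]
            intro x _
            obtain ⟨p, hp⟩ := S.mkQ_surjective x
            exact ⟨p, hp⟩
          · rw [N.exactAt_iff' (i + 1) i (i - 1) (ChainComplex.prev _ i)
              (ChainComplex.next _ i)]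
            exact ShortComplex.exact_of_isZero_X₂ _ (isZero_tri_X (f := f0) (g := g0) (w := w) i h1 h2 h3)
    have hsub : SubprojDomain M (N.X 0) := fun φ => ⟨N.X 0, hP, φ, 𝟙 _, Category.comp_id φ⟩
    let fmor : ((HomologicalComplex.single (ModuleCat.{u} R) (ComplexShape.down ℤ) 0).obj M) ⟶ N :=
      HomologicalComplex.mkHomFromSingle (show M ⟶ N.X 0 from f0) (fun i hi => by
        have : i = -1 := by
          have : i + 1 = 0 := hi
          omega
        subst this
        exact w)
    obtain ⟨Q, hQ, a, b, hab⟩ := h M N hexact 0 hsub fmor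
    set ι := HomologicalComplex.singleObjXSelf (ComplexShape.down ℤ) 0 M with hι
    set α : M ⟶ Q.X 0 := ι.inv ≫ a.f 0 with hα
    have hα0 : α ≫ Q.d 0 (-1) = 0 := by
      have hc := a.comm' 0 (-1) (show (-1 : ℤ) + 1 = 0 by omega)
      rw [hα, Category.assoc, hc, HomologicalComplex.single_obj_d, zero_comp, comp_zero]
    have hab0 : α ≫ b.f 0 = f0 := by
      have := HomologicalComplex.congr_hom hab 0
      rw [HomologicalComplex.comp_f,
        HomologicalComplex.mkHomFromSingle_f] at this
      rw [hα, Category.assoc, this, ← Category.assoc, Iso.inv_hom_id, Category.id_comp]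
    let Z := LinearMap.ker (Q.d 0 (-1)).hom
    have hZproj : Projective (ModuleCat.of R ↥Z) := projective_ker_of_projective Q hQ 0
    let rmap : M ⟶ ModuleCat.of R ↥Z := ModuleCat.ofHom <| LinearMap.codRestrict Z α.hom (fun x => by
      show Q.d 0 (-1) (α x) = 0
      have : (α ≫ Q.d 0 (-1)) x = (0 : M ⟶ Q.X (-1)) x := by rw [hα0]
      exact this)
    let pmap : ModuleCat.of R ↥Z ⟶ M := ModuleCat.ofHom <| LinearMap.codRestrict S ((b.f 0).hom.comp Z.subtype)
      (fun z => by
        have hc := b.comm' 0 (-1) (show (-1 : ℤ) + 1 = 0 by omega)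
        have happ := DFunLike.congr_fun (congrArg ModuleCat.Hom.hom hc) z.val
        have hz : Q.d 0 (-1) z.val = 0 := z.2
        have h5 : S.mkQ (b.f 0 z.val) = b.f (-1) (Q.d 0 (-1) z.val) := happ
        rw [hz, map_zero] at h5
        rw [← Submodule.Quotient.mk_eq_zero S, ← Submodule.mkQ_apply]
        exact h5)
    have hretr : rmap ≫ pmap = 𝟙 M := by
      apply ModuleCat.hom_ext
      apply LinearMap.ext
      intro x
      apply Subtype.ext
      show b.f 0 (α x) = x.val
      exact DFunLike.congr_fun (congrArg ModuleCat.Hom.hom hab0) x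
    exact projective_of_retract hZproj rmap pmap hretr
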